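/- If G is a graph of order n, then the number of maximum independent sets of G is at most 3^(n/3) if n ≡ 0 (mod 3), at most 4·3^((n−4)/3) if n ≡ 1 (mod 3), and at most 2·3^((n−2)/3) if n ≡ 2 (mod 3). -/

import Mathlib

open SimpleGraph

/-- A set of vertices is independent if its vertices are pairwise non-adjacent. -/
def SimpleGraph.IsIndepSet' {V : Type*} (G : SimpleGraph V) (s : Set V) : Prop :=
  s.Pairwise (fun u v => ¬ G.Adj u v)

/-- The independence number of a graph. -/
noncomputable def indepNum {V : Type*} (G : SimpleGraph V) : ℕ :=
  sSup {k | ∃ s : Finset V, G.IsIndepSet' ↑s ∧ s.card = k}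

/-- The number of maximum independent sets of a graph. -/
noncomputable def numMaxIndep {V : Type*} (G : SimpleGraph V) : ℕ :=
  {s : Finset V | G.IsIndepSet' ↑s ∧ s.card = _root_.indepNum G}.ncard

open Finset in
def hfun : ℕ → ℕ
  | 0 => 1 | 1 => 1 | 2 => 2 | 3 => 3 | 4 => 4
  | (n+5) => 3 * hfun (n+2)

lemma hfun_le_succ : ∀ n, hfun n ≤ hfun (n+1)
  | 0 => by decide
  | 1 => by decide
  | 2 => by decide
  | 3 => by decide
  | 4 => by decide
  | (n+5) => by
      have := hfun_le_succ (n+2)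
      rw [show n+2+1 = n+3 by omega] at this
      show 3 * hfun (n+2) ≤ 3 * hfun (n+3)
      omega

lemma hfun_mono : Monotone hfun := monotone_nat_of_le_succ hfun_le_succ

lemma hfun_two : ∀ m, 2 * hfun m ≤ hfun (m+2)
  | 0 => by decide
  | 1 => by decide
  | 2 => by decide
  | 3 => by decide
  | 4 => by decide
  | (m+5) => by
      have := hfun_two (m+2)
      rw [show m+2+2 = m+4 by omega] at this
      show 2 * (3 * hfun (m+2)) ≤ 3 * hfun (m+4)
      omega

lemma hfun_three : ∀ m, 3 * hfun m ≤ hfun (m+3)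
  | 0 => by decide
  | 1 => by decide
  | (m+2) => le_of_eq (rfl : 3 * hfun (m+2) = hfun (m+5)).symm

lemma hfun_four : ∀ m, 4 * hfun m ≤ hfun (m+4)
  | 0 => by decide
  | 1 => by decide
  | 2 => by decide
  | 3 => by decide
  | 4 => by decide
  | (m+5) => by
      have := hfun_four (m+2)
      rw [show m+2+4 = m+6 by omega] at this
      show 4 * (3 * hfun (m+2)) ≤ 3 * hfun (m+6)
      omega

lemma hfun_key : ∀ d m, (d+1) * hfun m ≤ hfun (m + d + 1)
  | 0, m => by simpa using hfun_le_succ m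
  | 1, m => by simpa [add_assoc] using hfun_two m
  | 2, m => by simpa [show m + 2 + 1 = m + 3 by omega] using hfun_three m
  | 3, m => by simpa [show m + 3 + 1 = m + 4 by omega] using hfun_four m
  | (d+4), m => by
      have h1 := hfun_key (d+1) m
      have h2 := hfun_three (m + d + 2)
      have e : m + d + 2 + 3 = m + (d+4) + 1 := by omega
      calc (d+4+1) * hfun m ≤ 3 * ((d+1+1) * hfun m) := by nlinarith [Nat.zero_le (hfun m)]
        _ ≤ 3 * hfun (m + (d+1) + 1) := by omega
        _ ≤ hfun (m + (d+4) + 1) := by rw [← e]; simpa [show m + (d+1) + 1 = m + d + 2 by omega] using h2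

lemma hfun_bound : ∀ n, (n % 3 = 0 → hfun n ≤ 3 ^ (n / 3)) ∧
    (n % 3 = 1 → hfun n ≤ 4 * 3 ^ ((n - 4) / 3)) ∧
    (n % 3 = 2 → hfun n ≤ 2 * 3 ^ ((n - 2) / 3))
  | 0 => by decide
  | 1 => by decide
  | 2 => by decide
  | 3 => by decide
  | 4 => by decide
  | (n+5) => by
      obtain ⟨i0, i1, i2⟩ := hfun_bound (n+2)
      have e : hfun (n+5) = 3 * hfun (n+2) := rfl
      refine ⟨fun hr => ?_, fun hr => ?_, fun hr => ?_⟩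
      · have := i0 (by omega)
        have : hfun (n+5) ≤ 3 * 3 ^ ((n+2)/3) := by omega
        calc hfun (n+5) ≤ 3 ^ ((n+2)/3 + 1) := by rw [pow_succ]; omega
          _ = 3 ^ ((n+5)/3) := by congr 1; omega
      · have := i1 (by omega)
        have : hfun (n+5) ≤ 3 * (4 * 3 ^ ((n+2-4)/3)) := by omega
        calc hfun (n+5) ≤ 4 * 3 ^ ((n+2-4)/3 + 1) := by rw [pow_succ]; omega
          _ = 4 * 3 ^ ((n+5-4)/3) := by congr 2; omega
      · have := i2 (by omega)
        have : hfun (n+5) ≤ 3 * (2 * 3 ^ ((n+2-2)/3)) := by omega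
        calc hfun (n+5) ≤ 2 * 3 ^ ((n+2-2)/3 + 1) := by rw [pow_succ]; omega
          _ = 2 * 3 ^ ((n+5-2)/3) := by congr 2; omega

open SimpleGraph Finset

section helpers
variable {V : Type*} [Fintype V] (G : SimpleGraph V)

lemma bdd_above : BddAbove {k | ∃ s : Finset V, G.IsIndepSet' ↑s ∧ s.card = k} :=
  ⟨Fintype.card V, by rintro k ⟨s, -, rfl⟩; simpa using s.card_le_univ⟩

lemma card_le_indepNum {s : Finset V} (hs : G.IsIndepSet' ↑s) : s.card ≤ _root_.indepNum G :=
  le_csSup (bdd_above G) ⟨s, hs, rfl⟩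

lemma exists_max : ∃ s : Finset V, G.IsIndepSet' ↑s ∧ s.card = _root_.indepNum G := by
  have hne : {k | ∃ s : Finset V, G.IsIndepSet' ↑s ∧ s.card = k}.Nonempty :=
    ⟨0, ∅, by simp [SimpleGraph.IsIndepSet'], by simp⟩
  exact Nat.sSup_mem hne (bdd_above G)

lemma nadj_symm : Symmetric (fun u v => ¬ G.Adj u v) := fun _ _ h h2 => h h2.symm

/-- Counting maximum independent sets containing a fixed vertex `u`. -/
lemma count_contain (u : V) (s : Set V)
    (hsdef : ∀ w, w ∈ s ↔ (¬ G.Adj u w ∧ w ≠ u)) :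
    {I : Finset V | G.IsIndepSet' ↑I ∧ I.card = _root_.indepNum G ∧ u ∈ I}.ncard
      ≤ numMaxIndep (G.induce s) := by
  classical
  set A := {I : Finset V | G.IsIndepSet' ↑I ∧ I.card = _root_.indepNum G ∧ u ∈ I} with hA
  rcases A.eq_empty_or_nonempty with hAe | ⟨I₀, hI₀⟩
  · simp [hAe]
  -- from an independent set of G' we get an independent set of G with one more vertex
  have lift : ∀ t : Finset ↥s, (G.induce s).IsIndepSet' ↑t → t.card + 1 ≤ _root_.indepNum G := by
    intro t ht
    have hu : u ∉ t.map (Function.Embedding.subtype _) := by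
      simp only [Finset.mem_map, Function.Embedding.coe_subtype]
      rintro ⟨⟨w, hw⟩, -, rfl⟩
      exact ((hsdef w).1 hw).2 rfl
    have hind : G.IsIndepSet' ↑(insert u (t.map (Function.Embedding.subtype _))) := by
      rw [Finset.coe_insert, SimpleGraph.IsIndepSet',
        (haveI : Std.Symm (fun u v : V => ¬ G.Adj u v) := ⟨fun _ _ h => nadj_symm G h⟩; Set.pairwise_insert_of_symm (r := fun u v : V => ¬ G.Adj u v))]
      constructor
      · rintro a ha b hb hab
        simp only [Finset.coe_map, Set.mem_image, Finset.mem_coe,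
          Function.Embedding.coe_subtype] at ha hb
        obtain ⟨a', ha', rfl⟩ := ha
        obtain ⟨b', hb', rfl⟩ := hb
        have hne : a' ≠ b' := fun h => hab (by rw [h])
        exact ht ha' hb' hne
      · rintro b hb -
        simp only [Finset.coe_map, Set.mem_image, Finset.mem_coe,
          Function.Embedding.coe_subtype] at hb
        obtain ⟨⟨b', hb'⟩, -, rfl⟩ := hb
        exact ((hsdef b').1 hb').1
    have := card_le_indepNum G hind
    rwa [Finset.card_insert_of_notMem hu, Finset.card_map] at this
  -- the deletion map
  have hmem : ∀ {I : Finset V}, I ∈ A → ∀ w ∈ I.erase u, w ∈ s := by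
    intro I hI w hw
    obtain ⟨hind, -, huI⟩ := hI
    have hwI := Finset.mem_of_mem_erase hw
    have hne : w ≠ u := Finset.ne_of_mem_erase hw
    exact (hsdef w).2 ⟨fun h => (hind huI hwI hne.symm) h, hne⟩
  set f : Finset V → Finset ↥s := fun I => (I.erase u).subtype (· ∈ s) with hf
  have hfind : ∀ {I : Finset V}, I ∈ A → (G.induce s).IsIndepSet' ↑(f I) := by
    intro I hI a ha b hb hab
    simp only [hf, Finset.mem_coe, Finset.mem_subtype] at ha hb
    have h1 : (a : V) ∈ I := Finset.mem_of_mem_erase ha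
    have h2 : (b : V) ∈ I := Finset.mem_of_mem_erase hb
    have hne : (a : V) ≠ (b : V) := fun h => hab (Subtype.ext h)
    simp only [comap_adj, Function.Embedding.coe_subtype]
    exact hI.1 h1 h2 hne
  have hfcard : ∀ {I : Finset V}, I ∈ A → (f I).card = I.card - 1 := by
    intro I hI
    have hcs : ((I.erase u).subtype (· ∈ s)).card = ((I.erase u).filter (· ∈ s)).card :=
      Finset.card_subtype _ _
    rw [hf]
    simp only []
    rw [hcs, Finset.filter_true_of_mem (fun w hw => hmem hI w hw),
      Finset.card_erase_of_mem hI.2.2]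
  -- independence number of the induced graph
  have hpos : 1 ≤ _root_.indepNum G := by
    have h1 := card_le_indepNum G hI₀.1
    have h2 : 1 ≤ I₀.card := Finset.card_pos.2 ⟨u, hI₀.2.2⟩
    omega
  have hval : _root_.indepNum (G.induce s) = _root_.indepNum G - 1 := by
    obtain ⟨t, ht, htc⟩ := exists_max (G.induce s)
    have h1 := lift t ht
    have h2 : _root_.indepNum G - 1 ≤ _root_.indepNum (G.induce s) := by
      have h3 := card_le_indepNum (G.induce s) (hfind hI₀)
      have h4 := hfcard hI₀
      have h5 := hI₀.2.1
      omega
    omega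
  have hmaps : ∀ I ∈ A,
      f I ∈ {J : Finset ↥s | (G.induce s).IsIndepSet' ↑J ∧ J.card = _root_.indepNum (G.induce s)} := by
    intro I hI
    refine ⟨hfind hI, ?_⟩
    rw [hfcard hI, hI.2.1, hval]
  have hinj : Set.InjOn f A := by
    intro I₁ h₁ I₂ h₂ he
    have key : ∀ {I : Finset V}, I ∈ A →
        I = insert u ((f I).map (Function.Embedding.subtype _)) := by
      intro I hI
      rw [hf]
      simp only []
      rw [Finset.subtype_map_of_mem (fun w hw => hmem hI w hw),
        Finset.insert_erase hI.2.2]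
    rw [key h₁, key h₂, he]
  have hfin : {J : Finset ↥s | (G.induce s).IsIndepSet' ↑J ∧
      J.card = _root_.indepNum (G.induce s)}.Finite := Set.toFinite _
  exact Set.ncard_le_ncard_of_injOn f hmaps hinj hfin

end helpers

universe u

lemma main_bound : ∀ (n : ℕ) {V : Type u} [Fintype V] (G : SimpleGraph V),
    Fintype.card V = n → numMaxIndep G ≤ hfun n := by
  intro n
  induction n using Nat.strong_induction_on with
  | _ n IH =>
    intro V _ G hn
    classical
    rcases Nat.eq_zero_or_pos n with hn0 | hn1
    · -- empty graph
      subst hn0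
      have hsub : {s : Finset V | G.IsIndepSet' ↑s ∧ s.card = _root_.indepNum G} ⊆ {∅} := by
        intro s _
        have : s.card = 0 := le_antisymm (hn ▸ s.card_le_univ) (Nat.zero_le _)
        simp [Finset.card_eq_zero.1 this]
      calc numMaxIndep G ≤ ({∅} : Set (Finset V)).ncard :=
            Set.ncard_le_ncard hsub (Set.finite_singleton _)
        _ = 1 := Set.ncard_singleton _
        _ ≤ hfun 0 := by decide
    · have hne : Nonempty V := Fintype.card_pos_iff.1 (hn ▸ hn1)
      obtain ⟨v, -, hv⟩ := Finset.exists_min_image Finset.univ (fun w => G.degree w)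
        ⟨Classical.arbitrary V, Finset.mem_univ _⟩
      set d := G.degree v with hd
      set T : Finset V := insert v (G.neighborFinset v) with hT
      have hTcard : T.card = d + 1 := by
        rw [hT, Finset.card_insert_of_notMem (G.notMem_neighborFinset_self v),
          G.card_neighborFinset_eq_degree]
      have hdn : d + 1 ≤ n := by
        have := Finset.card_le_univ T
        rw [hn] at this
        omega
      -- every maximum independent set meets T
      have cover : ∀ I : Finset V, G.IsIndepSet' ↑I → I.card = _root_.indepNum G →
          ∃ u ∈ T, u ∈ I := by
        intro I hI hIc
        by_contra hcon
        push_neg at hcon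
        have hvI : v ∉ I := hcon v (Finset.mem_insert_self _ _)
        have hind : G.IsIndepSet' ↑(insert v I) := by
          rw [Finset.coe_insert, SimpleGraph.IsIndepSet',
            (haveI : Std.Symm (fun u v : V => ¬ G.Adj u v) := ⟨fun _ _ h => nadj_symm G h⟩; Set.pairwise_insert_of_symm (r := fun u v : V => ¬ G.Adj u v))]
          refine ⟨hI, fun b hb _ hadj => ?_⟩
          exact hcon b (Finset.mem_insert_of_mem ((G.mem_neighborFinset v b).2 hadj))
            (Finset.mem_coe.1 hb)
        have := card_le_indepNum G hind
        rw [Finset.card_insert_of_notMem hvI, hIc] at this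
        omega
      -- the Finset of maximum independent sets
      set Fm : Finset (Finset V) :=
        Finset.univ.filter (fun I => G.IsIndepSet' ↑I ∧ I.card = _root_.indepNum G) with hFm
      have hnum : numMaxIndep G = Fm.card := by
        rw [numMaxIndep, show {s : Finset V | G.IsIndepSet' ↑s ∧ s.card = _root_.indepNum G}
          = ↑Fm by ext I; simp [hFm], Set.ncard_coe_finset]
      have hsubB : Fm ⊆ T.biUnion (fun u => Fm.filter (fun I => u ∈ I)) := by
        intro I hI
        have hI' := hI
        rw [Finset.mem_filter] at hI'
        obtain ⟨u, hu, huI⟩ := cover I hI'.2.1 hI'.2.2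
        exact Finset.mem_biUnion.2 ⟨u, hu, Finset.mem_filter.2 ⟨hI, huI⟩⟩
      -- bound each fiber
      have fiber : ∀ u ∈ T, (Fm.filter (fun I => u ∈ I)).card ≤ hfun (n - (d + 1)) := by
        intro u hu
        set s : Set V := {w | ¬ G.Adj u w ∧ w ≠ u} with hs
        have h1 : ((Fm.filter (fun I => u ∈ I)).card : ℕ)
            = {I : Finset V | G.IsIndepSet' ↑I ∧ I.card = _root_.indepNum G ∧ u ∈ I}.ncard := by
          rw [show {I : Finset V | G.IsIndepSet' ↑I ∧ I.card = _root_.indepNum G ∧ u ∈ I}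
            = ↑(Fm.filter (fun I => u ∈ I)) by ext I; simp [hFm, and_assoc],
            Set.ncard_coe_finset]
        have h2 := count_contain G u s (fun w => Iff.rfl)
        have hcards : Fintype.card ↥s = n - (G.degree u + 1) := by
          rw [← Set.toFinset_card,
            show s.toFinset = Finset.univ \ (insert u (G.neighborFinset u)) by
              ext w
              simp only [Set.mem_toFinset, hs, Set.mem_setOf_eq, Finset.mem_sdiff,
                Finset.mem_univ, true_and, Finset.mem_insert, G.mem_neighborFinset, not_or]
              tauto,
            Finset.card_sdiff_of_subset (Finset.subset_univ _), Finset.card_univ, hn,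
            Finset.card_insert_of_notMem (G.notMem_neighborFinset_self u),
            G.card_neighborFinset_eq_degree]
        have hlt : Fintype.card ↥s < n := by
          have hdu : 0 < G.degree u + 1 := Nat.succ_pos _
          omega
        have h3 := IH _ hlt (G.induce s) rfl
        have h4 : hfun (Fintype.card ↥s) ≤ hfun (n - (d + 1)) := by
          apply hfun_mono
          have := hv u (Finset.mem_univ u)
          omega
        omega
      calc numMaxIndep G = Fm.card := hnum
        _ ≤ (T.biUnion (fun u => Fm.filter (fun I => u ∈ I))).card :=
            Finset.card_le_card hsubB
        _ ≤ ∑ u ∈ T, (Fm.filter (fun I => u ∈ I)).card := Finset.card_biUnion_le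
        _ ≤ ∑ _u ∈ T, hfun (n - (d + 1)) := Finset.sum_le_sum fiber
        _ = (d + 1) * hfun (n - (d + 1)) := by rw [Finset.sum_const, hTcard, smul_eq_mul]
        _ ≤ hfun n := by
            have := hfun_key d (n - d - 1)
            rw [show n - d - 1 + d + 1 = n by omega] at this
            rw [show n - (d + 1) = n - d - 1 by omega]
            exact this

theorem stmt17 {V : Type*} [Fintype V] (G : SimpleGraph V) (n : ℕ)
    (hn : Fintype.card V = n) :
    (n % 3 = 0 → numMaxIndep G ≤ 3 ^ (n / 3)) ∧
    (n % 3 = 1 → numMaxIndep G ≤ 4 * 3 ^ ((n - 4) / 3)) ∧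
    (n % 3 = 2 → numMaxIndep G ≤ 2 * 3 ^ ((n - 2) / 3)) := by
  have h := main_bound n G hn
  obtain ⟨b0, b1, b2⟩ := hfun_bound n
  exact ⟨fun hr => le_trans h (b0 hr), fun hr => le_trans h (b1 hr),
    fun hr => le_trans h (b2 hr)⟩
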